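/- There exists a Hilbert space H, a densely defined closed operator A on H, and a vector g ∈ C^∞(A) such that A(closure(K(A,g)) ∩ D(A)) is not contained in closure(K(A,g)) ('Krylov escape'). Concretely: take H = ℂe₀ ⊕ H' where T' is self-adjoint on H' with cyclic vector g', set T = 0 ⊕ T', pick x₀ ∈ H' \ D(T'), define D(A) = D(T) ∔ span{x₀}, Ax₀ = e₀, Ax = Tx for x ∈ D(T); then A is densely defined and closed, closure(K(A,g)) = H' with g = 0 ⊕ g', x₀ ∈ closure(K(A,g)) ∩ D(A), yet Ax₀ = e₀ ⊥ closure(K(A,g)). -/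

import Mathlib

open scoped ENNReal
noncomputable section KE

abbrev Hsp : Type := lp (fun _ : ℕ => ℂ) 2

def wt (j : ℕ) : ℂ := if Even j then ((j / 2 + 1 : ℕ) : ℂ) else 0

def shiftW (u : ℕ → ℂ) : ℕ → ℂ
  | 0 => 0
  | 1 => 0
  | (j + 2) => wt j * u j

lemma memtwo {f g : ℕ → ℂ} (h : ∀ j, f j = g j) (hg : Memℓp g 2) : Memℓp f 2 := by
  have : f = g := funext h
  rwa [this]

lemma summable_of_memtwo {f : ℕ → ℂ} (hf : Memℓp f 2) :
    Summable (fun j => ‖f j‖ ^ (2:ℝ)) := by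
  have := (memℓp_gen_iff (p := 2) (by norm_num)).1 hf
  simpa using this

lemma memtwo_of_summable {f : ℕ → ℂ} (hf : Summable (fun j => ‖f j‖ ^ (2:ℝ))) :
    Memℓp f 2 := by
  apply memℓp_gen
  simpa using hf

lemma memtwo_shiftW {u : ℕ → ℂ} (hu : Memℓp (fun j => wt j * u j) 2) :
    Memℓp (shiftW u) 2 := by
  apply memtwo_of_summable
  rw [← summable_nat_add_iff 2]
  have := summable_of_memtwo hu
  simpa [shiftW] using this

def D0 : Submodule ℂ Hsp where
  carrier := {u | Memℓp (fun j => wt j * (u : ℕ → ℂ) j) 2}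
  zero_mem' := by
    simp only [Set.mem_setOf_eq, lp.coeFn_zero, Pi.zero_apply, mul_zero]
    exact zero_memℓp
  add_mem' := by
    intro u v hu hv
    refine memtwo (g := (fun j => wt j * (u : ℕ → ℂ) j) + fun j => wt j * (v : ℕ → ℂ) j)
      (fun j => ?_) (hu.add hv)
    simp [lp.coeFn_add, mul_add]
  smul_mem' := by
    intro c u hu
    refine memtwo (g := c • fun j => wt j * (u : ℕ → ℂ) j) (fun j => ?_) (hu.const_smul c)
    simp [lp.coeFn_smul]
    ring

lemma D0_def (u : Hsp) : u ∈ D0 ↔ Memℓp (fun j => wt j * (u : ℕ → ℂ) j) 2 := Iff.rfl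

def x0f : ℕ → ℂ := fun j => if Even j then (1 : ℂ) / (j + 2) else 0

lemma x0f_norm_le (j : ℕ) : ‖x0f j‖ ≤ 1 / (j + 1 : ℝ) := by
  have hpos : (0:ℝ) < j + 1 := by positivity
  unfold x0f
  split
  · rw [norm_div, norm_one]
    have : ‖(j + 2 : ℂ)‖ = (j + 2 : ℝ) := by
      norm_cast
    rw [this]
    apply div_le_div_of_nonneg_left one_pos.le hpos
    linarith
  · simpa using hpos.le

lemma x0_mem : Memℓp x0f 2 := by
  apply memℓp_gen (p := 2)
  have hs : Summable (fun j : ℕ => 1 / ((j:ℝ) + 1) ^ (2:ℕ)) := by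
    have := (summable_nat_add_iff 1).2 (Real.summable_one_div_nat_pow.2 (by norm_num : 1 < 2))
    simpa using this
  refine Summable.of_nonneg_of_le (fun j => by positivity) (fun j => ?_) hs
  have h1 := x0f_norm_le j
  have h2 : (0:ℝ) ≤ ‖x0f j‖ := norm_nonneg _
  have : ((2:ℝ≥0∞).toReal) = (2:ℝ) := by simp
  rw [this, Real.rpow_two]
  calc ‖x0f j‖ ^ 2 ≤ (1 / ((j:ℝ)+1)) ^ 2 := by
        apply pow_le_pow_left₀ h2 h1
    _ = 1 / ((j:ℝ) + 1) ^ (2:ℕ) := by rw [div_pow, one_pow]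

def x0 : Hsp := ⟨x0f, x0_mem⟩

lemma x0_not_mem_D0 : x0 ∉ D0 := by
  intro h
  have hsum : Summable (fun j => ‖wt j * x0f j‖ ^ ((2:ℝ≥0∞).toReal)) := by
    have := (memℓp_gen_iff (p := 2) (by norm_num)).1 h
    exact this
  have hzero := hsum.tendsto_atTop_zero
  have hcomp : Filter.Tendsto (fun k : ℕ => ‖wt (2*k) * x0f (2*k)‖ ^ ((2:ℝ≥0∞).toReal))
      Filter.atTop (nhds 0) :=
    hzero.comp (Filter.tendsto_atTop_atTop_of_monotone
      (fun a b hab => by omega) (fun b => ⟨b, by omega⟩))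
  have hval : ∀ k : ℕ, wt (2*k) * x0f (2*k) = 1/2 := by
    intro k
    have hk : Even (2*k) := even_two_mul k
    have h2 : ((2*k)/2 : ℕ) = k := by omega
    simp only [wt, x0f, if_pos hk, h2]
    have hne' : ((2*(k:ℂ)) + 2) ≠ 0 := by
      intro hc
      have : (2*(k:ℝ)) + 2 = 0 := by exact_mod_cast congrArg Complex.re hc
      nlinarith [Nat.cast_nonneg (α := ℝ) k]
    push_cast
    rw [mul_one_div, div_eq_div_iff hne' (by norm_num : (2:ℂ) ≠ 0)]
    ring
  have : Filter.Tendsto (fun _ : ℕ => ‖(1/2 : ℂ)‖ ^ ((2:ℝ≥0∞).toReal)) Filter.atTop (nhds 0) := by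
    convert hcomp using 2 with k
    rw [hval k]
  have h14 := tendsto_const_nhds_iff.1 this
  rw [show ‖(1/2:ℂ)‖ = 1/2 by norm_num] at h14
  have : ((2:ℝ≥0∞).toReal) = (2:ℝ) := by simp
  rw [this] at h14
  norm_num [Real.rpow_two] at h14

def Smap : D0 →ₗ[ℂ] Hsp where
  toFun u := ⟨shiftW (u : ℕ → ℂ), memtwo_shiftW ((D0_def _).1 u.2)⟩
  map_add' u v := by
    apply Subtype.ext
    funext j
    have : ((↑(u + v) : Hsp) : ℕ → ℂ) = ((u:Hsp) : ℕ → ℂ) + ((v:Hsp) : ℕ → ℂ) := by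
      rw [Submodule.coe_add, lp.coeFn_add]
    show shiftW _ j = shiftW _ j + shiftW _ j
    rw [this]
    match j with
    | 0 => simp [shiftW]
    | 1 => simp [shiftW]
    | (i+2) => simp [shiftW, mul_add]
  map_smul' c u := by
    apply Subtype.ext
    funext j
    have : ((↑(c • u) : Hsp) : ℕ → ℂ) = c • (((u:Hsp)) : ℕ → ℂ) := by
      rw [Submodule.coe_smul, lp.coeFn_smul]
    show shiftW _ j = (c • (_ : Hsp) : Hsp) j
    rw [this, lp.coeFn_smul]
    match j with
    | 0 => simp [shiftW]
    | 1 => simp [shiftW]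
    | (i+2) => simp [shiftW]; ring

lemma Smap_coe (u : D0) (j : ℕ) : (Smap u : ℕ → ℂ) j = shiftW (u : ℕ → ℂ) j := rfl

def A0 : Hsp →ₗ.[ℂ] Hsp := ⟨D0, Smap⟩

def eH (j : ℕ) : Hsp := lp.single 2 j 1

def Aop : Hsp →ₗ.[ℂ] Hsp := A0.supSpanSingleton x0 (eH 1) x0_not_mem_D0

lemma Aop_domain : Aop.domain = D0 ⊔ (ℂ ∙ x0) := rfl

lemma Aop_apply (c : Hsp) (hc : c ∈ D0) (μ : ℂ)
    (h : c + μ • x0 ∈ Aop.domain) :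
    Aop ⟨c + μ • x0, h⟩ = Smap ⟨c, hc⟩ + μ • eH 1 := by
  have := A0.supSpanSingleton_apply_mk x0 (eH 1) x0_not_mem_D0 c hc μ
  exact this

lemma single_coe (i : ℕ) (a : ℂ) (j : ℕ) :
    (lp.single 2 i a : Hsp) j = if j = i then a else 0 := by
  by_cases h : j = i
  · subst h; rw [lp.single_apply_self, if_pos rfl]
  · rw [lp.single_apply_ne 2 i _ h, if_neg h]

lemma memtwo_single (i : ℕ) (a : ℂ) : Memℓp (fun j => if j = i then a else 0) 2 :=
  memtwo (fun j => (single_coe i a j).symm) (lp.memℓp _)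

def psi (k : ℕ) : Hsp := (k.factorial : ℂ) • eH (2*k)

lemma psi_coe (k j : ℕ) : (psi k : ℕ → ℂ) j = if j = 2*k then (k.factorial : ℂ) else 0 := by
  rw [psi, lp.coeFn_smul, Pi.smul_apply, eH, single_coe]
  split <;> simp

lemma psi_mem_D0 (k : ℕ) : psi k ∈ D0 := by
  rw [D0_def]
  refine memtwo (g := fun j => if j = 2*k then wt (2*k) * (k.factorial : ℂ) else 0)
    (fun j => ?_) (memtwo_single _ _)
  simp only [psi_coe]
  by_cases h : j = 2*k
  · subst h; simp
  · simp [h]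

lemma psi_mem (k : ℕ) : psi k ∈ Aop.domain := by
  rw [Aop_domain]
  exact Submodule.mem_sup_left (psi_mem_D0 k)

lemma wt_two_mul (k : ℕ) : wt (2*k) = ((k+1 : ℕ) : ℂ) := by
  have hk : Even (2*k) := even_two_mul k
  have h2 : ((2*k)/2 : ℕ) = k := by omega
  rw [wt, if_pos hk, h2]

lemma Smap_psi (k : ℕ) : Smap ⟨psi k, psi_mem_D0 k⟩ = psi (k+1) := by
  apply Subtype.ext
  funext j
  rw [Smap_coe]
  match j with
  | 0 =>
    show (0:ℂ) = _
    rw [psi_coe]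
    have : (0:ℕ) ≠ 2*(k+1) := by omega
    rw [if_neg this]
  | 1 =>
    show (0:ℂ) = _
    rw [psi_coe]
    have : (1:ℕ) ≠ 2*(k+1) := by omega
    rw [if_neg this]
  | (i+2) =>
    show wt i * (psi k : ℕ → ℂ) i = _
    rw [psi_coe, psi_coe]
    by_cases h : i = 2*k
    · subst h
      rw [if_pos rfl, if_pos (by omega : 2*k+2 = 2*(k+1)), wt_two_mul]
      rw [Nat.factorial_succ]
      push_cast
      ring
    · rw [if_neg h, if_neg (by omega : ¬ (i+2 = 2*(k+1))), mul_zero]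

lemma Aop_psi (k : ℕ) : Aop ⟨psi k, psi_mem k⟩ = psi (k+1) := by
  have hdecomp : psi k + (0:ℂ) • x0 = psi k := by rw [zero_smul, add_zero]
  have hmem' : psi k + (0:ℂ) • x0 ∈ Aop.domain := by rw [hdecomp]; exact psi_mem k
  have h1 : Aop ⟨psi k, psi_mem k⟩ = Aop ⟨psi k + (0:ℂ) • x0, hmem'⟩ := by
    congr 1
    exact Subtype.ext hdecomp.symm
  rw [h1, Aop_apply _ (psi_mem_D0 k), Smap_psi, zero_smul, add_zero]

lemma single_mem_D0 (i : ℕ) (a : ℂ) : lp.single 2 i a ∈ D0 := by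
  rw [D0_def]
  refine memtwo (g := fun j => if j = i then wt i * a else 0)
    (fun j => ?_) (memtwo_single _ _)
  simp only [single_coe]
  by_cases h : j = i
  · subst h; simp
  · simp [h]

lemma dense_domain : Dense (Aop.domain : Set Hsp) := by
  intro f
  have hsum := lp.hasSum_single (E := fun _ : ℕ => ℂ) ENNReal.ofNat_ne_top f
  refine mem_closure_of_tendsto hsum (Filter.Eventually.of_forall fun s => ?_)
  have : ∑ i ∈ s, lp.single 2 i (f i) ∈ D0 :=
    Submodule.sum_mem _ (fun i _ => single_mem_D0 i (f i))
  rw [Aop_domain]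
  exact Submodule.mem_sup_left this

lemma eval_cont (j : ℕ) : Continuous fun f : Hsp => (f : ℕ → ℂ) j := by
  refine (LipschitzWith.of_dist_le_mul (K := 1) fun f g => ?_).continuous
  rw [NNReal.coe_one, one_mul, dist_eq_norm, dist_eq_norm]
  have : (f : ℕ → ℂ) j - (g : ℕ → ℂ) j = ((f - g : Hsp) : ℕ → ℂ) j := by
    rw [lp.coeFn_sub, Pi.sub_apply]
  rw [this]
  exact lp.norm_apply_le_norm (by norm_num) (f - g) j

lemma graph_iff (z : Hsp × Hsp) :
    z ∈ Aop.graph ↔ ∃ c, ∃ hc : c ∈ D0, ∃ μ : ℂ,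
      z.1 = c + μ • x0 ∧ z.2 = Smap ⟨c, hc⟩ + μ • eH 1 := by
  constructor
  · intro hz
    obtain ⟨y, hy1, hy2⟩ := Aop.mem_graph_iff.1 hz
    have hy : (y : Hsp) ∈ D0 ⊔ (ℂ ∙ x0) := y.2
    obtain ⟨c, hc, w, hw, hcw⟩ := Submodule.mem_sup.1 hy
    obtain ⟨μ, rfl⟩ := Submodule.mem_span_singleton.1 hw
    refine ⟨c, hc, μ, ?_, ?_⟩
    · rw [← hy1, ← hcw]
    · have hymem : c + μ • x0 ∈ Aop.domain := hcw ▸ y.2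
      have : y = ⟨c + μ • x0, hymem⟩ := Subtype.ext hcw.symm
      rw [← hy2, this, Aop_apply c hc μ]
  · rintro ⟨c, hc, μ, h1, h2⟩
    have hmem : c + μ • x0 ∈ Aop.domain := by
      rw [Aop_domain]
      exact Submodule.add_mem_sup hc (Submodule.smul_mem _ μ (Submodule.mem_span_singleton_self x0))
    have := Aop.mem_graph ⟨c + μ • x0, hmem⟩
    rw [Aop_apply c hc μ hmem] at this
    have hz : z = (c + μ • x0, Smap ⟨c, hc⟩ + μ • eH 1) := Prod.ext h1 h2
    rw [hz]
    exact this

lemma eH_one_coe (j : ℕ) : (eH 1 : ℕ → ℂ) j = if j = 1 then 1 else 0 := single_coe 1 1 j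

set_option synthInstance.maxHeartbeats 1000000 in
instance : FirstCountableTopology (Hsp × Hsp) := inferInstance

instance : FrechetUrysohnSpace (Hsp × Hsp) :=
  FirstCountableTopology.frechetUrysohnSpace

instance : SequentialSpace (Hsp × Hsp) :=
  FrechetUrysohnSpace.to_sequentialSpace

lemma graph_closed : IsClosed (Aop.graph : Set (Hsp × Hsp)) := by
  apply IsSeqClosed.isClosed
  intro z L hz hL
  choose c hc μ hu hv using fun n => (graph_iff (z n)).1 (hz n)
  -- limits of components
  have hL1 : Filter.Tendsto (fun n => (z n).1) Filter.atTop (nhds L.1) :=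
    (continuous_fst.tendsto L).comp hL
  have hL2 : Filter.Tendsto (fun n => (z n).2) Filter.atTop (nhds L.2) :=
    (continuous_snd.tendsto L).comp hL
  -- second components coordinatewise
  have hcoord2 : ∀ j, Filter.Tendsto (fun n => ((z n).2 : ℕ → ℂ) j) Filter.atTop
      (nhds ((L.2 : ℕ → ℂ) j)) := fun j => ((eval_cont j).tendsto L.2).comp hL2
  -- the second component formula, coordinatewise
  have hv' : ∀ n j, ((z n).2 : ℕ → ℂ) j
      = shiftW (c n : ℕ → ℂ) j + μ n * (eH 1 : ℕ → ℂ) j := by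
    intro n j
    rw [hv n, lp.coeFn_add, Pi.add_apply, lp.coeFn_smul, Pi.smul_apply, smul_eq_mul]
    rfl
  -- μ converges
  set μ' : ℂ := (L.2 : ℕ → ℂ) 1 with hμ'
  have hμten : Filter.Tendsto μ Filter.atTop (nhds μ') := by
    have : ∀ n, μ n = ((z n).2 : ℕ → ℂ) 1 := by
      intro n
      rw [hv' n 1]
      simp [shiftW, eH_one_coe]
    rw [funext this]
    exact hcoord2 1
  -- c converges
  set cl : Hsp := L.1 - μ' • x0 with hcl
  have hcten : Filter.Tendsto c Filter.atTop (nhds cl) := by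
    have : ∀ n, c n = (z n).1 - μ n • x0 := by
      intro n
      rw [hu n]
      abel
    rw [funext this]
    exact hL1.sub (hμten.smul tendsto_const_nhds)
  have hccoord : ∀ j, Filter.Tendsto (fun n => (c n : ℕ → ℂ) j) Filter.atTop
      (nhds ((cl : ℕ → ℂ) j)) := fun j => ((eval_cont j).tendsto cl).comp hcten
  -- coordinate identity in the limit
  have hkey : ∀ j, (L.2 : ℕ → ℂ) j = shiftW (cl : ℕ → ℂ) j + μ' * (eH 1 : ℕ → ℂ) j := by
    intro j
    refine tendsto_nhds_unique (hcoord2 j) ?_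
    have h1 : Filter.Tendsto (fun n => shiftW (c n : ℕ → ℂ) j) Filter.atTop
        (nhds (shiftW (cl : ℕ → ℂ) j)) := by
      match j with
      | 0 => simpa [shiftW] using tendsto_const_nhds
      | 1 => simpa [shiftW] using tendsto_const_nhds
      | (i+2) =>
        show Filter.Tendsto (fun n => wt i * (c n : ℕ → ℂ) i) Filter.atTop
          (nhds (wt i * (cl : ℕ → ℂ) i))
        exact (hccoord i).const_mul _
    have h2 : Filter.Tendsto (fun n => μ n * (eH 1 : ℕ → ℂ) j) Filter.atTop
        (nhds (μ' * (eH 1 : ℕ → ℂ) j)) := hμten.mul_const _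
    have := h1.add h2
    refine this.congr fun n => (hv' n j).symm
  -- cl ∈ D0
  have hclD0 : cl ∈ D0 := by
    rw [D0_def]
    refine memtwo (g := fun j => (L.2 : ℕ → ℂ) (j+2)) (fun j => ?_) ?_
    · have := hkey (j+2)
      rw [eH_one_coe, if_neg (by omega : ¬ (j+2 = 1)), mul_zero, add_zero] at this
      exact this.symm
    · apply memtwo_of_summable
      exact (summable_nat_add_iff 2).2 (summable_of_memtwo (lp.memℓp L.2))
  -- conclude
  refine (graph_iff L).2 ⟨cl, hclD0, μ', ?_, ?_⟩
  · rw [hcl]; abel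
  · apply lp.ext
    funext j
    rw [lp.coeFn_add, Pi.add_apply, lp.coeFn_smul, Pi.smul_apply, smul_eq_mul]
    rw [hkey j]
    rfl

open scoped InnerProductSpace in
lemma inner_e1 (f : Hsp) : ⟪eH 1, f⟫_ℂ = (f : ℕ → ℂ) 1 := by
  rw [eH, lp.inner_single_left, RCLike.inner_apply, map_one, mul_one]

lemma e1_not_closure :
    eH 1 ∉ closure ((Submodule.span ℂ (Set.range psi)) : Set Hsp) := by
  intro h
  set φ := innerSL ℂ (eH 1) with hφ
  have hker : ((Submodule.span ℂ (Set.range psi)) : Set Hsp) ⊆ φ ⁻¹' {0} := by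
    intro u hu
    have : Submodule.span ℂ (Set.range psi) ≤ LinearMap.ker (φ : Hsp →ₗ[ℂ] ℂ) := by
      rw [Submodule.span_le]
      rintro _ ⟨k, rfl⟩
      simp only [SetLike.mem_coe, LinearMap.mem_ker]
      show φ (psi k) = 0
      rw [hφ, innerSL_apply_apply, inner_e1, psi_coe]
      rw [if_neg (by omega : ¬ (1 = 2*k))]
    have := this hu
    simpa using this
  have hclosed : IsClosed (φ ⁻¹' {0} : Set Hsp) :=
    IsClosed.preimage φ.continuous isClosed_singleton
  have : eH 1 ∈ φ ⁻¹' {0} := (hclosed.closure_subset_iff.2 hker) h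
  have h1 : φ (eH 1) = 0 := this
  rw [hφ, innerSL_apply_apply, inner_e1, eH_one_coe, if_pos rfl] at h1
  exact one_ne_zero h1

lemma x0_mem_closure :
    x0 ∈ closure ((Submodule.span ℂ (Set.range psi)) : Set Hsp) := by
  have hsum := lp.hasSum_single (E := fun _ : ℕ => ℂ) ENNReal.ofNat_ne_top x0
  refine mem_closure_of_tendsto hsum (Filter.Eventually.of_forall fun s => ?_)
  refine Submodule.sum_mem _ (fun i _ => ?_)
  have hx0i : (x0 : ℕ → ℂ) i = x0f i := rfl
  rw [hx0i]
  by_cases he : Even i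
  · obtain ⟨k, hk⟩ := he
    have hik : i = 2*k := by omega
    have h1 : lp.single 2 i (x0f i) = (x0f i * ((k.factorial : ℂ))⁻¹) • psi k := by
      rw [psi, smul_smul, hik]
      have hkfac : (x0f (2*k) * ((k.factorial : ℂ))⁻¹ * (k.factorial : ℂ)) = x0f (2*k) := by
        have : ((k.factorial : ℂ)) ≠ 0 := by
          exact_mod_cast Nat.factorial_ne_zero k
        field_simp
      rw [hkfac, eH]
      have := lp.single_smul (𝕜 := ℂ) (E := fun _ : ℕ => ℂ) 2 (2*k) (x0f (2*k)) (1:ℂ)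
      rw [smul_eq_mul, mul_one] at this
      rw [← this]
    rw [h1]
    exact Submodule.smul_mem _ _ (Submodule.subset_span ⟨k, rfl⟩)
  · have : x0f i = 0 := by rw [x0f, if_neg he]
    rw [this]
    have : lp.single 2 i (0:ℂ) = (0 : Hsp) := by
      apply lp.ext
      funext j
      rw [single_coe, lp.coeFn_zero, Pi.zero_apply, ite_self]
    rw [this]
    exact Submodule.zero_mem _

lemma x0_mem_dom : x0 ∈ Aop.domain := by
  rw [Aop_domain]
  exact Submodule.mem_sup_right (Submodule.mem_span_singleton_self x0)

lemma Aop_x0 : Aop ⟨x0, x0_mem_dom⟩ = eH 1 := by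
  have hdecomp : (0:Hsp) + (1:ℂ) • x0 = x0 := by rw [zero_add, one_smul]
  have hmem' : (0:Hsp) + (1:ℂ) • x0 ∈ Aop.domain := by rw [hdecomp]; exact x0_mem_dom
  have h1 : Aop ⟨x0, x0_mem_dom⟩ = Aop ⟨(0:Hsp) + (1:ℂ) • x0, hmem'⟩ := by
    congr 1
    exact Subtype.ext hdecomp.symm
  rw [h1, Aop_apply _ (Submodule.zero_mem D0)]
  have : Smap ⟨(0:Hsp), Submodule.zero_mem D0⟩ = 0 := by
    have : (⟨(0:Hsp), Submodule.zero_mem D0⟩ : D0) = 0 := rfl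
    rw [this, map_zero]
  rw [this, zero_add, one_smul]

end KE

/-- **Krylov escape.** There exist a Hilbert space `H`, a densely defined closed
operator `A` on `H`, and a `C^∞(A)`-vector `g` (with orbit `ψ k = Aᵏg`) such that some
`x ∈ closure(K(A,g)) ∩ D(A)` satisfies `Ax ∉ closure(K(A,g))`. -/
theorem stmt12 :
    ∃ (H : Type) (_ : NormedAddCommGroup H) (_ : InnerProductSpace ℂ H) (_ : CompleteSpace H)
      (A : H →ₗ.[ℂ] H) (g : H) (ψ : ℕ → H) (hmem : ∀ k, ψ k ∈ A.domain),
      Dense (A.domain : Set H)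
      ∧ IsClosed (A.graph : Set (H × H))
      ∧ ψ 0 = g
      ∧ (∀ k, A ⟨ψ k, hmem k⟩ = ψ (k + 1))
      ∧ ∃ x : H, ∃ hx : x ∈ A.domain,
          x ∈ closure ((Submodule.span ℂ (Set.range ψ)) : Set H)
          ∧ A ⟨x, hx⟩ ∉ closure ((Submodule.span ℂ (Set.range ψ)) : Set H) := by
  refine ⟨Hsp, inferInstance, inferInstance, inferInstance, Aop, psi 0, psi,
    psi_mem, dense_domain, graph_closed, rfl, Aop_psi, x0, x0_mem_dom,
    x0_mem_closure, ?_⟩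
  rw [Aop_x0]
  exact e1_not_closure
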